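/- Let $S$ be a linear operator on $\mathbb{F}[x]$. The map $\varphi \mapsto \varphi\circ S$ on $\mathbb{F}[x]^*$ equals $\cdot_W$-multiplication by some fixed functional $\psi$ if and only if $S$ does not increase degrees and commutes with $D_W$; in that case $\psi = \varepsilon_0 \circ S$ (where $\varepsilon_0$ is evaluation at $0$), and for $S=T_{h,W}$ one gets $\psi=\varepsilon_h$, evaluation at $h$. -/

import Mathlib

open Polynomial

/-- `χ = φ ·_W ψ`, i.e. `χ(xⁿ/wₙ) = ∑_{k ≤ n} φ(xᵏ/wₖ) ψ(x^{n-k}/w_{n-k})`. -/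
def mulProp {F : Type*} [Field F] (w : ℕ → F)
    (φ ψ χ : F[X] →ₗ[F] F) : Prop :=
  ∀ n : ℕ, χ ((w n)⁻¹ • X ^ n) =
    ∑ k ∈ Finset.range (n + 1),
      φ ((w k)⁻¹ • X ^ k) * ψ ((w (n - k))⁻¹ • X ^ (n - k))

private lemma sepPoly {F : Type*} [Field F] {p q : F[X]}
    (h : ∀ φ : F[X] →ₗ[F] F, φ p = φ q) : p = q := by
  ext n
  simpa [lcoeff_apply] using h (lcoeff F n)

private lemma lhomExt {F : Type*} [Field F] {M : Type*} [AddCommMonoid M] [Module F M]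
    {f g : F[X] →ₗ[F] M} (h : ∀ n : ℕ, f (X ^ n) = g (X ^ n)) : f = g := by
  refine LinearMap.ext fun p => ?_
  induction p using Polynomial.induction_on' with
  | add p q hp hq => simp [map_add, hp, hq]
  | monomial n a => rw [← smul_X_eq_monomial, map_smul, map_smul, h]

private lemma coeffSum {F : Type*} [Field F] (c : ℕ → F) (n k : ℕ) (hk : k < n) :
    (∑ j ∈ Finset.range n, c j • (X : F[X]) ^ j).coeff k = c k := by
  rw [finset_sum_coeff]
  simp only [coeff_smul, coeff_X_pow, smul_eq_mul, mul_ite, mul_one, mul_zero]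
  simp [Finset.sum_ite_eq, hk]

private lemma mulPropIff {F : Type*} [Field F] (w : ℕ → F) (hw : ∀ n, w n ≠ 0)
    (S : F[X] →ₗ[F] F[X]) (ψ : F[X] →ₗ[F] F) :
    (∀ φ : F[X] →ₗ[F] F, mulProp w φ ψ (φ ∘ₗ S)) ↔
    ∀ n : ℕ, S (X ^ n) = ∑ k ∈ Finset.range (n + 1),
        (w n * ψ ((w (n - k))⁻¹ • X ^ (n - k)) * (w k)⁻¹) • X ^ k := by
  constructor
  · intro H n
    apply sepPoly
    intro φ
    have h1 := H φ n
    simp only [LinearMap.comp_apply, map_smul, smul_eq_mul] at h1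
    rw [map_sum]
    calc φ (S (X ^ n)) = w n * ((w n)⁻¹ * φ (S (X ^ n))) := by
          field_simp [hw n]
      _ = w n * ∑ k ∈ Finset.range (n + 1),
            ((w k)⁻¹ * φ (X ^ k)) * ((w (n - k))⁻¹ * ψ (X ^ (n - k))) := by rw [h1]
      _ = _ := by
          rw [Finset.mul_sum]
          refine Finset.sum_congr rfl fun k hk => ?_
          simp only [map_smul, smul_eq_mul]
          ring
  · intro H φ
    unfold mulProp
    intro n
    simp only [LinearMap.comp_apply, map_smul, smul_eq_mul, H n, map_sum, Finset.mul_sum]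
    refine Finset.sum_congr rfl fun k hk => ?_
    linear_combination (ψ (X ^ (n - k)) * φ (X ^ k) * (w (n - k))⁻¹ * (w k)⁻¹) *
      mul_inv_cancel₀ (hw n)

private lemma degXpow {F : Type*} [Field F] {S : F[X] →ₗ[F] F[X]} {c : ℕ → ℕ → F}
    (hS : ∀ n, S (X ^ n) = ∑ k ∈ Finset.range (n + 1), c n k • (X : F[X]) ^ k)
    (n : ℕ) : (S (X ^ n)).degree ≤ (n : ℕ) := by
  rw [hS n]
  refine (degree_sum_le _ _).trans ?_
  refine Finset.sup_le fun k hk => ?_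
  refine (degree_smul_le _ _).trans ?_
  rw [degree_X_pow]
  exact_mod_cast Nat.lt_succ_iff.mp (Finset.mem_range.mp hk)

private lemma degLe {F : Type*} [Field F] {S : F[X] →ₗ[F] F[X]}
    (h : ∀ n : ℕ, (S (X ^ n)).degree ≤ (n : ℕ)) (p : F[X]) : (S p).degree ≤ p.degree := by
  have hp : S p = ∑ i ∈ p.support, p.coeff i • S (X ^ i) := by
    conv_lhs => rw [p.as_sum_support]
    rw [map_sum]
    exact Finset.sum_congr rfl fun i _ => by rw [← smul_X_eq_monomial, map_smul]
  rw [hp]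
  refine (degree_sum_le _ _).trans ?_
  refine Finset.sup_le fun i hi => ?_
  exact ((degree_smul_le _ _).trans (h i)).trans
    (le_degree_of_ne_zero (Polynomial.mem_support_iff.mp hi))

private lemma commOf {F : Type*} [Field F] (w : ℕ → F) (hw : ∀ n, w n ≠ 0)
    (D : F[X] →ₗ[F] F[X]) (hD0 : D 1 = 0)
    (hD : ∀ n : ℕ, D (X ^ (n + 1)) = (w (n + 1) / w n) • (X : F[X]) ^ n)
    (S : F[X] →ₗ[F] F[X]) (c : ℕ → F)
    (hS : ∀ n, S (X ^ n) = ∑ k ∈ Finset.range (n + 1),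
      (w n * c (n - k) * (w k)⁻¹) • (X : F[X]) ^ k) :
    S ∘ₗ D = D ∘ₗ S := by
  apply lhomExt
  intro n
  rw [LinearMap.comp_apply, LinearMap.comp_apply]
  cases n with
  | zero =>
    have h1 : S (D ((X : F[X]) ^ 0)) = 0 := by rw [pow_zero, hD0, map_zero]
    rw [h1, hS 0]
    simp [hD0]
  | succ n =>
    have hR : D (S (X ^ (n + 1))) = ∑ k ∈ Finset.range (n + 1),
        ((w (n + 1) * c (n - k) * (w (k + 1))⁻¹) * (w (k + 1) / w k)) • (X : F[X]) ^ k := by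
      rw [hS (n + 1), map_sum, Finset.sum_range_succ']
      simp only [pow_zero, map_smul, hD0, smul_zero, add_zero, hD, Nat.succ_sub_succ, smul_smul]
    rw [hD n, map_smul, hS n, Finset.smul_sum, hR]
    refine Finset.sum_congr rfl fun k hk => ?_
    rw [smul_smul]
    congr 1
    field_simp [hw n, hw k, hw (k + 1)]

private lemma formulaOf {F : Type*} [Field F] (w : ℕ → F) (hw0 : w 0 = 1) (hw : ∀ n, w n ≠ 0)
    (D : F[X] →ₗ[F] F[X]) (hD0 : D 1 = 0)
    (hD : ∀ n : ℕ, D (X ^ (n + 1)) = (w (n + 1) / w n) • (X : F[X]) ^ n)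
    (S : F[X] →ₗ[F] F[X]) (hdeg : ∀ p : F[X], (S p).degree ≤ p.degree)
    (hcomm : S ∘ₗ D = D ∘ₗ S) :
    ∀ n : ℕ, S (X ^ n) = ∑ k ∈ Finset.range (n + 1),
      (w n * ((w (n - k))⁻¹ * (S (X ^ (n - k))).coeff 0) * (w k)⁻¹) • (X : F[X]) ^ k := by
  set a : ℕ → ℕ → F := fun n k => (S (X ^ n)).coeff k with ha
  have hrep : ∀ n, S (X ^ n) = ∑ k ∈ Finset.range (n + 1), a n k • (X : F[X]) ^ k := by
    intro n
    have hd : (S (X ^ n)).natDegree < n + 1 :=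
      Nat.lt_succ_of_le (natDegree_le_iff_degree_le.mpr
        ((hdeg (X ^ n)).trans_eq (degree_X_pow n)))
    calc S (X ^ n) = ∑ k ∈ Finset.range (n + 1), monomial k ((S (X ^ n)).coeff k) :=
          as_sum_range' _ _ hd
      _ = _ := Finset.sum_congr rfl fun k _ => (smul_X_eq_monomial).symm
  have hrec : ∀ n k, k < n + 1 →
      (w (n + 1) / w n) * a n k = a (n + 1) (k + 1) * (w (k + 1) / w k) := by
    intro n k hk
    have hc := LinearMap.congr_fun hcomm (X ^ (n + 1) : F[X])
    rw [LinearMap.comp_apply, LinearMap.comp_apply, hD n, map_smul, hrep (n + 1), map_sum,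
      Finset.sum_range_succ'] at hc
    simp only [pow_zero, map_smul, hD0, smul_zero, add_zero, hD, smul_smul] at hc
    have h2 := congrArg (fun p : F[X] => p.coeff k) hc
    rw [coeff_smul, smul_eq_mul, coeffSum _ _ _ hk] at h2
    exact h2
  have key : ∀ k n, a (n + k) k = w (n + k) / (w n * w k) * a n 0 := by
    intro k
    induction k with
    | zero =>
      intro n
      rw [hw0]
      field_simp [hw n]
      simp only [Nat.add_zero]
      ring
    | succ k ih =>
      intro n
      have h1 := hrec (n + k) k (by omega)
      have hne : w (k + 1) / w k ≠ 0 := div_ne_zero (hw _) (hw _)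
      have h2 : a (n + k + 1) (k + 1) =
          (w (n + k + 1) / w (n + k) * a (n + k) k) / (w (k + 1) / w k) :=
        (eq_div_iff hne).mpr h1.symm
      rw [show n + (k + 1) = (n + k) + 1 from rfl, h2, ih n]
      field_simp [hw n, hw k, hw (k + 1), hw (n + k), hw (n + k + 1)]
  intro n
  rw [hrep n]
  refine Finset.sum_congr rfl fun k hk => ?_
  have hkn : k ≤ n := Nat.lt_succ_iff.mp (Finset.mem_range.mp hk)
  have h3 := key k (n - k)
  rw [Nat.sub_add_cancel hkn] at h3
  rw [h3]
  congr 1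
  have h4 : (S (X ^ (n - k))).coeff 0 = a (n - k) 0 := rfl
  rw [h4]
  field_simp [hw n, hw k, hw (n - k)]

/-- For a linear operator `S` on `𝔽[x]`, the map `φ ↦ φ ∘ S` on `𝔽[x]*` is
`·_W`-multiplication by a fixed functional `ψ` iff `S` does not increase
degrees and commutes with `D_W`; then `ψ = ε₀ ∘ S`, and for `S = T_{h,W}` one
gets `ψ = ε_h`. -/
theorem stmt13 {F : Type*} [Field F] (w : ℕ → F) (hw0 : w 0 = 1)
    (hw : ∀ n, w n ≠ 0)
    (D : F[X] →ₗ[F] F[X]) (hD0 : D 1 = 0)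
    (hD : ∀ n : ℕ, D (X ^ (n + 1)) = (w (n + 1) / w n) • (X : F[X]) ^ n) :
    -- the characterization, and the formula `ψ = ε₀ ∘ S`
    (∀ S : F[X] →ₗ[F] F[X],
      ((∃ ψ : F[X] →ₗ[F] F, ∀ φ : F[X] →ₗ[F] F, mulProp w φ ψ (φ ∘ₗ S)) ↔
        ((∀ p : F[X], (S p).degree ≤ p.degree) ∧ S ∘ₗ D = D ∘ₗ S)) ∧
      (∀ ψ : F[X] →ₗ[F] F, (∀ φ : F[X] →ₗ[F] F, mulProp w φ ψ (φ ∘ₗ S)) →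
        ψ = (Polynomial.leval (0 : F)) ∘ₗ S)) ∧
    -- for `S = T_{h,W}` the functional is evaluation at `h`
    (∀ (h : F) (T : F[X] →ₗ[F] F[X]),
      (∀ n : ℕ, T (X ^ n) =
        ∑ k ∈ Finset.range (n + 1),
          (w n * h ^ (n - k) / (w (n - k) * w k)) • (X : F[X]) ^ k) →
      ∀ φ : F[X] →ₗ[F] F, mulProp w φ (Polynomial.leval h) (φ ∘ₗ T)) := by
  refine ⟨fun S => ⟨⟨?_, ?_⟩, ?_⟩, ?_⟩
  · rintro ⟨ψ, Hψ⟩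
    have hform := (mulPropIff w hw S ψ).mp Hψ
    constructor
    · exact degLe (degXpow
        (c := fun n k => w n * ψ ((w (n - k))⁻¹ • X ^ (n - k)) * (w k)⁻¹) hform)
    · exact commOf w hw D hD0 hD S (fun j => ψ ((w j)⁻¹ • X ^ j)) hform
  · rintro ⟨h1, h2⟩
    refine ⟨Polynomial.leval (0 : F) ∘ₗ S, (mulPropIff w hw S _).mpr fun n => ?_⟩
    rw [formulaOf w hw0 hw D hD0 hD S h1 h2 n]
    refine Finset.sum_congr rfl fun k hk => ?_
    simp only [LinearMap.comp_apply, map_smul, smul_eq_mul, leval_apply,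
      coeff_zero_eq_eval_zero]
  · intro ψ H
    apply lhomExt
    intro n
    have h1 := H (Polynomial.leval (0 : F)) n
    rw [Finset.sum_eq_single_of_mem 0 (Finset.mem_range.mpr n.succ_pos)
      (fun k _ hk0 => by simp [leval_apply, smul_eq_C_mul, zero_pow hk0])] at h1
    simp only [LinearMap.comp_apply, map_smul, smul_eq_mul, leval_apply, Nat.sub_zero,
      pow_zero, hw0, inv_one, eval_one, one_mul] at h1
    simp only [LinearMap.comp_apply, leval_apply]
    exact (mul_left_cancel₀ (inv_ne_zero (hw n)) h1).symm
  · intro h T hT φ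
    unfold mulProp
    intro n
    simp only [LinearMap.comp_apply, map_smul, smul_eq_mul, hT n, map_sum, Finset.mul_sum,
      leval_apply, eval_pow, eval_X]
    refine Finset.sum_congr rfl fun k hk => ?_
    field_simp [hw n, hw k, hw (n - k)]
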